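/- Define g(x) = (1+x)log(1+x) - x·log x with g(0) = 0, and for the additive classical noise channel (τ = 1) with noise K > 0 set η(N) = N + K, p(N) = sqrt((N + η + 1)² - 4N(N+1)), f(N) = (p + η - N - 1)/2, ℓ(N) = (p - η + N - 1)/2, and G(N) = g(η) - g(f) - g(ℓ). Then lim_{N→∞} G(N) = -1 - log K. -/

import Mathlib

open Filter Real

lemma sqrt_tendsto_atTop' : Tendsto Real.sqrt atTop atTop := by
  refine tendsto_atTop_atTop.2 fun b => ⟨b ^ 2, fun a ha => ?_⟩
  calc b ≤ |b| := le_abs_self b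
    _ = Real.sqrt (b ^ 2) := (Real.sqrt_sq_eq_abs b).symm
    _ ≤ Real.sqrt a := Real.sqrt_le_sqrt ha

lemma g_decomp {x : ℝ} (hx : 0 < x) :
    (1 + x) * Real.log (1 + x) - x * Real.log x
      = Real.log (1 + x) + x * Real.log (1 + 1 / x) := by
  have h1 : (1 : ℝ) + 1 / x = (1 + x) / x := by field_simp; ring
  rw [h1, Real.log_div (by positivity) (ne_of_gt hx)]
  ring

theorem limit_coherent_info_B2 (K : ℝ) (hK : 0 < K) :
    Filter.Tendsto
      (fun N : ℝ =>
        (fun x : ℝ => (1 + x) * Real.log (1 + x) - x * Real.log x) (N + K)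
          - (fun x : ℝ => (1 + x) * Real.log (1 + x) - x * Real.log x)
              ((Real.sqrt ((N + (N + K) + 1)^2 - 4 * N * (N + 1))
                  + (N + K) - N - 1) / 2)
          - (fun x : ℝ => (1 + x) * Real.log (1 + x) - x * Real.log x)
              ((Real.sqrt ((N + (N + K) + 1)^2 - 4 * N * (N + 1))
                  - (N + K) + N - 1) / 2))
      Filter.atTop (nhds (-1 - Real.log K)) := by
  set p : ℝ → ℝ := fun N => Real.sqrt ((K + 1) ^ 2 + 4 * K * N) with hpdef
  -- limits to atTop
  have hpTop : Tendsto p atTop atTop := by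
    apply sqrt_tendsto_atTop'.comp
    apply tendsto_atTop_add_const_left
    exact Tendsto.const_mul_atTop (by positivity) tendsto_id
  have hηTop : Tendsto (fun N : ℝ => N + K) atTop atTop :=
    tendsto_atTop_add_const_right _ K tendsto_id
  have hfTop : Tendsto (fun N : ℝ => (p N + K - 1) / 2) atTop atTop := by
    have := (tendsto_atTop_add_const_right atTop (K - 1) hpTop).atTop_div_const
      (by norm_num : (0:ℝ) < 2)
    refine this.congr fun N => by ring
  have hℓTop : Tendsto (fun N : ℝ => (p N - K - 1) / 2) atTop atTop := by
    have := (tendsto_atTop_add_const_right atTop (-(K + 1)) hpTop).atTop_div_const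
      (by norm_num : (0:ℝ) < 2)
    refine this.congr fun N => by ring
  have hA : Tendsto (fun x : ℝ => x * Real.log (1 + 1 / x)) atTop (nhds 1) :=
    Real.tendsto_mul_log_one_add_div_atTop 1
  have T1 := hA.comp hηTop
  have T2 := hA.comp hfTop
  have T3 := hA.comp hℓTop
  -- log ratio limit
  set F : ℝ → ℝ := fun s =>
    (2 + 2 * (K + 1) * s) / (2 * K + (K + 1) * s + Real.sqrt ((K + 1) ^ 2 * s ^ 2 + 4 * K * s))
    with hFdef
  have hF0 : F 0 = 1 / K := by
    simp only [hFdef]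
    norm_num
    field_simp
  have hFc : ContinuousAt F 0 := by
    apply ContinuousAt.div
    · fun_prop
    · fun_prop
    · norm_num
      positivity
  have hr : Tendsto (fun N : ℝ => 2 * (N + K + 1) / (2 * K * N + K + 1 + p N)) atTop
      (nhds (1 / K)) := by
    have hcomp : Tendsto (fun N : ℝ => F N⁻¹) atTop (nhds (1 / K)) := by
      rw [← hF0]
      exact hFc.tendsto.comp tendsto_inv_atTop_zero
    refine Tendsto.congr' ?_ hcomp
    filter_upwards [eventually_gt_atTop (0 : ℝ)] with N hN
    have hN' : N ≠ 0 := ne_of_gt hN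
    have harg : (K + 1) ^ 2 * (N⁻¹) ^ 2 + 4 * K * N⁻¹
        = ((K + 1) ^ 2 + 4 * K * N) * (N⁻¹) ^ 2 := by
      field_simp
    have hsq : Real.sqrt ((K + 1) ^ 2 * (N⁻¹) ^ 2 + 4 * K * N⁻¹) = p N * N⁻¹ := by
      rw [harg, Real.sqrt_mul (by positivity), Real.sqrt_sq (by positivity)]
    have hppos : 0 < p N := Real.sqrt_pos.2 (by positivity)
    have hden2 : 0 < 2 * K * N + K + 1 + p N := by positivity
    simp only [hFdef, hsq]
    rw [div_eq_div_iff (by positivity) (ne_of_gt hden2)]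
    field_simp
    ring
  have hlog : Tendsto (fun N : ℝ => Real.log (2 * (N + K + 1) / (2 * K * N + K + 1 + p N)))
      atTop (nhds (Real.log (1 / K))) :=
    ((Real.continuousAt_log (by positivity)).tendsto).comp hr
  -- combine
  have htot : Tendsto (fun N : ℝ =>
      Real.log (2 * (N + K + 1) / (2 * K * N + K + 1 + p N))
        + ((N + K) * Real.log (1 + 1 / (N + K))
          - ((p N + K - 1) / 2) * Real.log (1 + 1 / ((p N + K - 1) / 2))
          - ((p N - K - 1) / 2) * Real.log (1 + 1 / ((p N - K - 1) / 2))))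
      atTop (nhds (Real.log (1 / K) + (1 - 1 - 1))) :=
    hlog.add ((T1.sub T2).sub T3)
  have hval : Real.log (1 / K) + (1 - 1 - 1) = -1 - Real.log K := by
    rw [one_div, Real.log_inv]; ring
  rw [← hval]
  refine Tendsto.congr' ?_ htot
  filter_upwards [eventually_ge_atTop (1 : ℝ)] with N hN
  have hN0 : (0 : ℝ) < N := lt_of_lt_of_le one_pos hN
  have hargeq : (N + (N + K) + 1) ^ 2 - 4 * N * (N + 1) = (K + 1) ^ 2 + 4 * K * N := by ring
  have hpgt : K + 1 < p N := by
    have h1 : Real.sqrt ((K + 1) ^ 2) < Real.sqrt ((K + 1) ^ 2 + 4 * K * N) :=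
      Real.sqrt_lt_sqrt (by positivity) (by nlinarith)
    rwa [Real.sqrt_sq (by positivity)] at h1
  have hηpos : 0 < N + K := by positivity
  have hfpos : 0 < (p N + K - 1) / 2 := by linarith
  have hℓpos : 0 < (p N - K - 1) / 2 := by linarith
  have hf' : (p N + (N + K) - N - 1) / 2 = (p N + K - 1) / 2 := by ring
  have hℓ' : (p N - (N + K) + N - 1) / 2 = (p N - K - 1) / 2 := by ring
  have hp2 : p N ^ 2 = (K + 1) ^ 2 + 4 * K * N := Real.sq_sqrt (by positivity)
  have hprod : (1 + (p N + K - 1) / 2) * (1 + (p N - K - 1) / 2)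
      = (2 * K * N + K + 1 + p N) / 2 := by
    linear_combination hp2 / 4
  have hden2 : 0 < 2 * K * N + K + 1 + p N := by
    have hppos : 0 < p N := lt_trans (by positivity) hpgt
    positivity
  have hkey : Real.log (2 * (N + K + 1) / (2 * K * N + K + 1 + p N))
      = Real.log (1 + (N + K)) - Real.log (1 + (p N + K - 1) / 2)
        - Real.log (1 + (p N - K - 1) / 2) := by
    have h1 : 2 * (N + K + 1) / (2 * K * N + K + 1 + p N)
        = (1 + (N + K)) / ((1 + (p N + K - 1) / 2) * (1 + (p N - K - 1) / 2)) := by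
      rw [hprod]
      rw [div_div_eq_mul_div]
      rw [div_eq_div_iff (ne_of_gt hden2) (ne_of_gt hden2)]
      ring
    rw [h1, Real.log_div (by positivity) (by positivity),
      Real.log_mul (by positivity) (by positivity)]
    ring
  simp only [hargeq]
  rw [hf', hℓ', g_decomp hηpos, g_decomp hfpos, g_decomp hℓpos, hkey]
  ring
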